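/- Let r ≥ 4 and i ≥ 2 be integers and let s be an integer with binom(i+1,2)·s + (i+1) = binom(r+i, i). Then i + binom(i,2)·s − binom(r+i−1, i−1) ≥ 0. -/
import Mathlib


/-- If `binom(i+1,2) s + (i+1) = binom(r+i,i)` then
`i + binom(i,2) s - binom(r+i-1,i-1) ≥ 0`. -/
theorem stmt_10 (r i : ℕ) (hr : 4 ≤ r) (hi : 2 ≤ i) (hri : r = 4 → 3 ≤ i) (s : ℤ)
    (hs : ((i + 1).choose 2 : ℤ) * s + (i + 1) = ((r + i).choose i : ℤ)) :
    0 ≤ (i : ℤ) + ((i.choose 2 : ℤ)) * s - ((r + i - 1).choose (i - 1) : ℤ) := by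
  obtain ⟨j, rfl⟩ : ∃ j, i = j + 2 := ⟨i - 2, by omega⟩
  -- natural number binomial identities
  have F1 : (j + 3) * (j + 2).choose 1 = (j + 3).choose 2 * 2 :=
    Nat.add_one_mul_choose_eq (j + 2) 1
  have F2 : (j + 2) * (j + 1).choose 1 = (j + 2).choose 2 * 2 :=
    Nat.add_one_mul_choose_eq (j + 1) 1
  have F3 : (r + j + 2) * (r + j + 1).choose (j + 1) = (r + j + 2).choose (j + 2) * (j + 2) :=
    Nat.add_one_mul_choose_eq (r + j + 1) (j + 1)
  rw [Nat.choose_one_right] at F1 F2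
  have hsimp1 : r + (j + 2) - 1 = r + j + 1 := by omega
  have hsimp2 : j + 2 - 1 = j + 1 := by omega
  have hsimp3 : r + (j + 2) = r + j + 2 := by omega
  rw [hsimp1, hsimp2]
  rw [hsimp3] at hs
  -- cast to ℤ
  have F1z : ((j : ℤ) + 3) * (j + 2) = ((j + 3).choose 2 : ℤ) * 2 := by exact_mod_cast F1
  have F2z : ((j : ℤ) + 2) * (j + 1) = ((j + 2).choose 2 : ℤ) * 2 := by exact_mod_cast F2
  have F3z : ((r : ℤ) + j + 2) * ((r + j + 1).choose (j + 1) : ℤ)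
      = ((r + j + 2).choose (j + 2) : ℤ) * (j + 2) := by exact_mod_cast F3
  have hb : (0 : ℤ) ≤ ((r + j + 1).choose (j + 1) : ℤ) := by positivity
  set a : ℤ := ((r + j + 2).choose (j + 2) : ℤ)
  set b : ℤ := ((r + j + 1).choose (j + 1) : ℤ)
  set c2 : ℤ := ((j + 2).choose 2 : ℤ)
  set c2' : ℤ := ((j + 3).choose 2 : ℤ)
  have hs' : c2' * s + ((j : ℤ) + 3) = a := by push_cast at hs ⊢; linarith
  -- key equality: 2(i)(i+1)(goal expr) = 2 i (i+1) + 2((i-1)r - 2i) b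
  have key : (2 * ((j : ℤ) + 2) * (j + 3)) * (((j : ℤ) + 2) + c2 * s - b)
      = 2 * ((j : ℤ) + 2) * (j + 3) + 2 * (((j : ℤ) + 1) * r - 2 * (j + 2)) * b := by
    linear_combination (2 * c2 * s) * F1z + (4 * c2) * hs' - (2 * a - 2 * ((j : ℤ) + 3)) * F2z
      - (2 * ((j : ℤ) + 1)) * F3z
  have hcoef : (0 : ℤ) ≤ ((j : ℤ) + 1) * r - 2 * (j + 2) := by
    rcases Nat.lt_or_ge r 5 with h | h
    · have hr4 : r = 4 := by omega
      have := hri hr4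
      have hj : (1 : ℤ) ≤ j := by exact_mod_cast (by omega : 1 ≤ j)
      rw [hr4]; push_cast; nlinarith
    · have hr5 : (5 : ℤ) ≤ r := by exact_mod_cast h
      have hj : (0 : ℤ) ≤ j := by positivity
      nlinarith
  push_cast
  have hK : (0 : ℤ) < 2 * ((j : ℤ) + 2) * (j + 3) := by positivity
  have hRHS : (0 : ℤ) ≤ 2 * ((j : ℤ) + 2) * (j + 3)
      + 2 * (((j : ℤ) + 1) * r - 2 * (j + 2)) * b := by
    have h1 := mul_nonneg hcoef hb
    have h2 : (0 : ℤ) ≤ 2 * ((j : ℤ) + 2) * (j + 3) := le_of_lt (by positivity)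
    linarith
  have := (mul_nonneg_iff_of_pos_left hK).mp (key ▸ hRHS)
  convert this using 1
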